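/- Let n ≥ 2 and write n = 2m + β with β ∈ {0,1}. Then for the tower semigroup Γₙ: (1) #Ap(Γₙ, q^{n−1}) = q^{n−1}; (2) #Ap(Γₙ, 1) = q^{⌊n/2⌋}; (3) if n = 2m, then for every i ∈ {1, …, n−2}, #Ap(Γₙ, q^i) = (q^{⌊m − i/2⌋} − 1) + q^i; (4) if n = 2m+1, then for every i ∈ {1, …, n−2}, #Ap(Γₙ, q^i) = (q^{⌈m − i/2⌉} − 1) + q^i. -/

import Mathlib

/-- A numerical semigroup: an additive submonoid of ℕ with finite complement. -/
def IsNumericalSemigroup (Γ : Set ℕ) : Prop :=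
  0 ∈ Γ ∧ (∀ x ∈ Γ, ∀ y ∈ Γ, x + y ∈ Γ) ∧ Γᶜ.Finite

/-- The Apéry set Ap(Γ,x) = {s ∈ Γ : s - x ∉ Γ}. -/
def Ap (Γ : Set ℕ) (x : ℕ) : Set ℕ := {s ∈ Γ | ∀ t ∈ Γ, s ≠ t + x}

/-- The conductor `cₙ` of the Garcia–Stichtenoth tower semigroups:
`cₙ = qⁿ - q^((n+1)/2)` if `n` is odd, `cₙ = qⁿ - q^(n/2)` if `n` is even. -/
def cGS (q n : ℕ) : ℕ := if n % 2 = 1 then q ^ n - q ^ ((n + 1) / 2) else q ^ n - q ^ (n / 2)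

/-- The Weierstrass semigroups of the Garcia–Stichtenoth tower:
Γ₁ = ℕ and Γₙ = q·Γ_{n-1} ∪ (cₙ + ℕ) for n ≥ 2. -/
def GST (q : ℕ) : ℕ → Set ℕ
  | 0 => Set.univ
  | 1 => Set.univ
  | n + 2 => (fun x => q * x) '' GST q (n + 1) ∪ {x | cGS q (n + 2) ≤ x}

lemma cGS_eq (q n : ℕ) : cGS q n = q ^ n - q ^ ((n + 1) / 2) := by
  unfold cGS
  rcases Nat.even_or_odd n with h | h
  · obtain ⟨m, rfl⟩ := h
    have h1 : (m + m) % 2 = 0 := by omega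
    have h2 : (m + m + 1) / 2 = (m + m) / 2 := by omega
    simp [h1, h2]
  · obtain ⟨m, rfl⟩ := h
    have h1 : (2 * m + 1) % 2 = 1 := by omega
    simp [h1]

lemma mem_GST {q : ℕ} (hq : 2 ≤ q) (n : ℕ) (s : ℕ) :
    s ∈ GST q (n + 1) ↔ ∃ k, k ≤ n ∧ q ^ k ∣ s ∧ q ^ (n + 1) - q ^ ((n + k + 2) / 2) ≤ s := by
  have hq0 : 0 < q := by omega
  induction n generalizing s with
  | zero =>
    simp only [GST, Set.mem_univ, true_iff]
    exact ⟨0, le_refl 0, one_dvd s, by simp⟩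
  | succ n ih =>
    show s ∈ (fun x => q * x) '' GST q (n + 1) ∪ {x | cGS q (n + 2) ≤ x} ↔ _
    have key : ∀ j : ℕ, q ^ (n + 1 + 1) - q ^ ((n + 1 + (j + 1) + 2) / 2) =
        q * (q ^ (n + 1) - q ^ ((n + j + 2) / 2)) := by
      intro j
      have e1 : (n + 1 + (j + 1) + 2) / 2 = (n + j + 2) / 2 + 1 := by omega
      rw [e1, Nat.mul_sub, ← pow_succ', ← pow_succ']
    constructor
    · rintro (⟨y, hy, rfl⟩ | hc)
      · obtain ⟨j, hj, hdvd, hle⟩ := (ih y).mp hy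
        refine ⟨j + 1, by omega, ?_, ?_⟩
        · rw [pow_succ']
          exact mul_dvd_mul_left q hdvd
        · rw [key j]
          exact Nat.mul_le_mul_left q hle
      · refine ⟨0, by omega, one_dvd s, ?_⟩
        rw [cGS_eq] at hc
        have e : (n + 1 + 0 + 2) / 2 = (n + 2 + 1) / 2 := by omega
        rw [e]; exact hc
    · rintro ⟨k, hk, hdvd, hle⟩
      match k with
      | 0 =>
        right
        rw [cGS_eq]
        have e : (n + 1 + 0 + 2) / 2 = (n + 2 + 1) / 2 := by omega
        rw [e] at hle; exact hle
      | j + 1 =>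
        left
        have hqd : q ∣ s := dvd_trans (dvd_pow_self q (Nat.succ_ne_zero j)) hdvd
        obtain ⟨y, rfl⟩ := hqd
        refine ⟨y, (ih y).mpr ⟨j, by omega, ?_, ?_⟩, rfl⟩
        · rw [pow_succ'] at hdvd
          exact (mul_dvd_mul_iff_left (by omega : q ≠ 0)).mp hdvd
        · rw [key j] at hle
          exact Nat.le_of_mul_le_mul_left hle hq0

lemma mem_GST' {q : ℕ} (hq : 2 ≤ q) {n : ℕ} (hn : 1 ≤ n) (s : ℕ) :
    s ∈ GST q n ↔ ∃ k, k ≤ n - 1 ∧ q ^ k ∣ s ∧ q ^ n - q ^ ((n + k + 1) / 2) ≤ s := by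
  obtain ⟨n', rfl⟩ : ∃ m, n = m + 1 := ⟨n - 1, by omega⟩
  rw [mem_GST hq]
  simp only [Nat.add_sub_cancel]
  constructor
  · rintro ⟨k, hk, h1, h2⟩
    exact ⟨k, hk, h1, by convert h2 using 3; omega⟩
  · rintro ⟨k, hk, h1, h2⟩
    exact ⟨k, hk, h1, by convert h2 using 3; omega⟩

lemma gst_cGS_mem {q : ℕ} (hq : 2 ≤ q) {n : ℕ} (hn : 1 ≤ n) {s : ℕ} (hs : cGS q n ≤ s) :
    s ∈ GST q n := by
  rw [mem_GST' hq hn]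
  refine ⟨0, by omega, one_dvd s, ?_⟩
  rw [cGS_eq] at hs
  convert hs using 3 <;> omega

lemma gst_pow_mem {q : ℕ} (hq : 2 ≤ q) {n : ℕ} (hn : 1 ≤ n) : q ^ (n - 1) ∈ GST q n := by
  rw [mem_GST' hq hn]
  refine ⟨n - 1, le_refl _, dvd_refl _, ?_⟩
  have : (n + (n - 1) + 1) / 2 = n := by omega
  rw [this]
  simp

lemma gst_add_pow_mem {q : ℕ} (hq : 2 ≤ q) {n : ℕ} (hn : 1 ≤ n) {s : ℕ} (hs : s ∈ GST q n) :
    s + q ^ (n - 1) ∈ GST q n := by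
  rw [mem_GST' hq hn] at hs ⊢
  obtain ⟨k, hk, h1, h2⟩ := hs
  exact ⟨k, hk, Dvd.dvd.add h1 (pow_dvd_pow q hk), le_trans h2 (Nat.le_add_right _ _)⟩

lemma gst_scale {q : ℕ} (hq : 2 ≤ q) (m y : ℕ) :
    q * y ∈ GST q (m + 2) ↔ y ∈ GST q (m + 1) := by
  have hq0 : 0 < q := by omega
  rw [mem_GST hq, mem_GST hq]
  have key : ∀ j : ℕ, q ^ (m + 1 + 1) - q ^ ((m + 1 + (j + 1) + 2) / 2) =
      q * (q ^ (m + 1) - q ^ ((m + j + 2) / 2)) := by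
    intro j
    have e1 : (m + 1 + (j + 1) + 2) / 2 = (m + j + 2) / 2 + 1 := by omega
    rw [e1, Nat.mul_sub, ← pow_succ', ← pow_succ']
  constructor
  · rintro ⟨k, hk, h1, h2⟩
    match k with
    | 0 =>
      refine ⟨0, by omega, one_dvd y, ?_⟩
      have h3 : q * (q ^ (m + 1) - q ^ ((m + 0 + 2) / 2)) ≤ q * y := by
        rw [← key 0]
        refine le_trans ?_ h2
        have : (m + 1 + 0 + 2) / 2 ≤ (m + 1 + (0 + 1) + 2) / 2 := by omega
        exact Nat.sub_le_sub_left (Nat.pow_le_pow_right (by omega) this) _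
      exact Nat.le_of_mul_le_mul_left h3 hq0
    | j + 1 =>
      refine ⟨j, by omega, ?_, ?_⟩
      · rw [pow_succ'] at h1
        exact (mul_dvd_mul_iff_left (by omega : q ≠ 0)).mp h1
      · rw [key j] at h2
        exact Nat.le_of_mul_le_mul_left h2 hq0
  · rintro ⟨j, hj, h1, h2⟩
    refine ⟨j + 1, by omega, ?_, ?_⟩
    · rw [pow_succ']
      exact mul_dvd_mul_left q h1
    · rw [key j]
      exact Nat.mul_le_mul_left q h2

lemma gst_scale_pow {q : ℕ} (hq : 2 ≤ q) (i : ℕ) : ∀ n y, i + 1 ≤ n →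
    (q ^ i * y ∈ GST q n ↔ y ∈ GST q (n - i)) := by
  induction i with
  | zero => intro n y _; simp
  | succ i ih =>
    intro n y hn
    obtain ⟨m, rfl⟩ : ∃ m, n = m + 2 + i := ⟨n - 2 - i, by omega⟩
    have e1 : q ^ (i + 1) * y = q ^ i * (q * y) := by ring
    rw [e1, ih (m + 2 + i) (q * y) (by omega)]
    have e2 : m + 2 + i - i = m + 2 := by omega
    have e3 : m + 2 + i - (i + 1) = m + 1 := by omega
    rw [e2, e3, gst_scale hq]

open Classical in
lemma ap_card_of_mem (Γ : Set ℕ) (x c : ℕ) (hx : 0 < x)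
    (hclosed : ∀ s ∈ Γ, s + x ∈ Γ) (hc : ∀ s, c ≤ s → s ∈ Γ) :
    (Ap Γ x).ncard = x := by
  have hmm : ∀ r : ℕ, r % x % x = r % x := fun r => Nat.mod_mod_of_dvd r (dvd_refl x)
  have hex : ∀ r : ℕ, ∃ s, s ∈ Γ ∧ s % x = r % x := by
    intro r
    refine ⟨(c + 1) * x + r % x, hc _ ?_, ?_⟩
    · have : c + 1 ≤ (c + 1) * x := Nat.le_mul_of_pos_right _ hx
      omega
    · rw [Nat.add_comm, Nat.add_mul_mod_self_right, hmm]
  set f : ℕ → ℕ := fun r => Nat.find (hex r) with hf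
  have hfmem : ∀ r, f r ∈ Γ ∧ f r % x = r % x := fun r => Nat.find_spec (hex r)
  have hiter : ∀ w, w ∈ Γ → ∀ j : ℕ, w + j * x ∈ Γ := by
    intro w hw j
    induction j with
    | zero => simpa using hw
    | succ j ih =>
      rw [Nat.succ_mul, ← Nat.add_assoc]
      exact hclosed _ ih
  have himg : Ap Γ x = f '' Set.Iio x := by
    ext s
    constructor
    · rintro ⟨hs, hap⟩
      refine ⟨s % x, Nat.mod_lt s hx, ?_⟩
      set w := f (s % x) with hw
      have hwm : w ∈ Γ ∧ w % x = s % x % x := hfmem (s % x)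
      have hws : w ≤ s := Nat.find_min' (hex (s % x)) ⟨hs, (hmm s).symm⟩
      have h1 : w % x = s % x := by rw [hwm.2, hmm]
      obtain ⟨j, hj⟩ : x ∣ s - w := (Nat.modEq_iff_dvd' hws).mp h1
      match j with
      | 0 => symm; omega
      | j + 1 =>
        exfalso
        have hj' : s - w = j * x + x := by rw [hj]; ring
        exact hap (w + j * x) (hiter w hwm.1 j) (by omega)
    · rintro ⟨r, hr, rfl⟩
      refine ⟨(hfmem r).1, ?_⟩
      intro t ht heq
      have htlt : t < f r := by omega
      have := Nat.find_min (hex r) htlt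
      simp only [not_and] at this
      refine this ht ?_
      rw [← (hfmem r).2, heq]
      exact (Nat.add_mod_right t x).symm
  have hinj : Set.InjOn f (Set.Iio x) := by
    intro a ha b hb hab
    simp only [Set.mem_Iio] at ha hb
    have h1 : a % x = b % x := by
      have ha2 := (hfmem a).2; have hb2 := (hfmem b).2
      rw [← ha2, ← hb2, hab]
    rwa [Nat.mod_eq_of_lt ha, Nat.mod_eq_of_lt hb] at h1
  rw [himg, Set.ncard_image_of_injOn hinj, ← Finset.coe_range, Set.ncard_coe_finset,
    Finset.card_range]

lemma gst_scale' {q : ℕ} (hq : 2 ≤ q) {n : ℕ} (hn : 2 ≤ n) (y : ℕ) :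
    q * y ∈ GST q n ↔ y ∈ GST q (n - 1) := by
  obtain ⟨m, rfl⟩ : ∃ m, n = m + 2 := ⟨n - 2, by omega⟩
  have : m + 2 - 1 = m + 1 := rfl
  rw [this, gst_scale hq]

lemma zero_mem_GST {q : ℕ} (hq : 2 ≤ q) {n : ℕ} (hn : 1 ≤ n) : 0 ∈ GST q n := by
  rw [mem_GST' hq hn]
  exact ⟨n - 1, le_refl _, dvd_zero _, by
    have : (n + (n - 1) + 1) / 2 = n := by omega
    rw [this]; simp⟩

lemma q_dvd_cGS {q : ℕ} (hq : 2 ≤ q) {n : ℕ} (hn : 2 ≤ n) : q ∣ cGS q n := by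
  rw [cGS_eq]
  exact Nat.dvd_sub (dvd_pow_self q (by omega)) (dvd_pow_self q (by omega))

lemma q_dvd_of_low {q : ℕ} (hq : 2 ≤ q) {n : ℕ} (hn : 2 ≤ n) {s : ℕ}
    (hs : s ∈ GST q n) (hle : s ≤ cGS q n) : q ∣ s := by
  rw [mem_GST' hq (by omega)] at hs
  obtain ⟨k, hk, h1, h2⟩ := hs
  match k with
  | 0 =>
    have he : cGS q n = q ^ n - q ^ ((n + 0 + 1) / 2) := by
      rw [cGS_eq]
    have : s = cGS q n := by omega
    rw [this]; exact q_dvd_cGS hq hn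
  | k + 1 => exact dvd_trans (dvd_pow_self q (Nat.succ_ne_zero k)) h1

lemma ap_one_eq {q : ℕ} (hq : 2 ≤ q) {n : ℕ} (hn : 2 ≤ n) :
    Ap (GST q n) 1 = GST q n ∩ Set.Iic (cGS q n) := by
  have hn1 : (1:ℕ) ≤ n := by omega
  ext s
  constructor
  · rintro ⟨hs, hap⟩
    refine ⟨hs, ?_⟩
    rcases le_or_gt s (cGS q n) with h | h
    · exact h
    · exact absurd (hap (s - 1) (gst_cGS_mem hq hn1 (by omega)) (by omega)) (by simp)
  · rintro ⟨hs, hle⟩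
    simp only [Set.mem_Iic] at hle
    refine ⟨hs, ?_⟩
    rcases Nat.eq_zero_or_pos s with rfl | hpos
    · intro t _ h; omega
    · have hqs : q ∣ s := q_dvd_of_low hq hn hs hle
      intro t ht heq
      rw [mem_GST' hq hn1] at ht
      obtain ⟨k, hk, h1, h2⟩ := ht
      match k with
      | 0 =>
        have he : cGS q n = q ^ n - q ^ ((n + 0 + 1) / 2) := by
          rw [cGS_eq]
        omega
      | k + 1 =>
        have hqt : q ∣ t := dvd_trans (dvd_pow_self q (Nat.succ_ne_zero k)) h1
        have hd : q ∣ s - t := Nat.dvd_sub hqs hqt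
        have : s - t = 1 := by omega
        rw [this] at hd
        have := Nat.le_of_dvd (by omega) hd
        omega

lemma card_low {q : ℕ} (hq : 2 ≤ q) : ∀ n, 2 ≤ n →
    (GST q n ∩ Set.Iic (cGS q n)).ncard = q ^ (n / 2) := by
  have hq0 : 0 < q := by omega
  have hinj : Function.Injective (fun y : ℕ => q * y) :=
    fun a b h => Nat.eq_of_mul_eq_mul_left hq0 h
  intro n hn2
  induction n, hn2 using Nat.le_induction with
  | base =>
    have hc2 : cGS q 2 = q * (q - 1) := by
      rw [cGS_eq]
      have : (2 + 1) / 2 = 1 := by norm_num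
      rw [this, pow_two, pow_one, Nat.mul_sub, Nat.mul_one]
    have himg : GST q 2 ∩ Set.Iic (cGS q 2) = (fun y => q * y) '' Set.Iio q := by
      ext s
      constructor
      · rintro ⟨hs, hle⟩
        simp only [Set.mem_Iic] at hle
        have hqs : q ∣ s := q_dvd_of_low hq (by norm_num) hs hle
        obtain ⟨y, rfl⟩ := hqs
        refine ⟨y, ?_, rfl⟩
        simp only [Set.mem_Iio]
        rw [hc2] at hle
        have := Nat.le_of_mul_le_mul_left hle hq0
        omega
      · rintro ⟨y, hy, rfl⟩
        simp only [Set.mem_Iio] at hy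
        constructor
        · show q * y ∈ GST q 2
          rw [mem_GST' hq (by norm_num)]
          refine ⟨1, by norm_num, ?_, ?_⟩
          · rw [pow_one]; exact dvd_mul_right q y
          · have : (2 + 1 + 1) / 2 = 2 := by norm_num
            rw [this]
            simp
        · simp only [Set.mem_Iic]
          rw [hc2]
          exact Nat.mul_le_mul_left q (by omega)
    rw [himg, Set.ncard_image_of_injective _ hinj, ← Finset.coe_range,
      Set.ncard_coe_finset, Finset.card_range]
    norm_num
  | succ n hn ih =>
    set D := q ^ n - q ^ (n / 2) with hD
    have hcq : cGS q (n + 1) = q * D := by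
      rw [cGS_eq, hD, Nat.mul_sub, ← pow_succ', ← pow_succ']
      congr 2
      omega
    have hcD : cGS q n ≤ D := by
      rw [cGS_eq, hD]
      exact Nat.sub_le_sub_left (Nat.pow_le_pow_right (by omega) (by omega)) _
    have himg : GST q (n + 1) ∩ Set.Iic (cGS q (n + 1)) =
        (fun y => q * y) '' (GST q n ∩ Set.Iic D) := by
      ext s
      constructor
      · rintro ⟨hs, hle⟩
        simp only [Set.mem_Iic] at hle
        have hqs : q ∣ s := q_dvd_of_low hq (by omega) hs (by omega)
        obtain ⟨y, rfl⟩ := hqs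
        refine ⟨y, ⟨?_, ?_⟩, rfl⟩
        · have := (gst_scale' hq (show 2 ≤ n + 1 by omega) y).mp hs
          simpa using this
        · simp only [Set.mem_Iic]
          rw [hcq] at hle
          exact Nat.le_of_mul_le_mul_left hle hq0
      · rintro ⟨y, ⟨hy, hyD⟩, rfl⟩
        simp only [Set.mem_Iic] at hyD
        constructor
        · show q * y ∈ GST q (n + 1)
          rw [gst_scale' hq (show 2 ≤ n + 1 by omega) y]
          simpa using hy
        · simp only [Set.mem_Iic]
          rw [hcq]
          exact Nat.mul_le_mul_left q hyD
    have hsplit : GST q n ∩ Set.Iic D =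
        (GST q n ∩ Set.Iic (cGS q n)) ∪ Set.Ioc (cGS q n) D := by
      ext s
      constructor
      · rintro ⟨hs, hle⟩
        simp only [Set.mem_Iic] at hle
        rcases le_or_gt s (cGS q n) with h | h
        · exact Or.inl ⟨hs, h⟩
        · exact Or.inr ⟨h, hle⟩
      · rintro (⟨hs, hle⟩ | ⟨h1, h2⟩)
        · simp only [Set.mem_Iic] at hle
          exact ⟨hs, Set.mem_Iic.mpr (le_trans hle hcD)⟩
        · exact ⟨gst_cGS_mem hq (by omega) (le_of_lt h1), h2⟩
    have hdisj : Disjoint (GST q n ∩ Set.Iic (cGS q n)) (Set.Ioc (cGS q n) D) := by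
      rw [Set.disjoint_left]
      rintro s ⟨_, hle⟩ ⟨h1, _⟩
      simp only [Set.mem_Iic] at hle
      omega
    have hfin1 : (GST q n ∩ Set.Iic (cGS q n)).Finite :=
      (Set.finite_Iic (cGS q n)).subset (Set.inter_subset_right)
    have hfin2 : (Set.Ioc (cGS q n) D).Finite := Set.finite_Ioc _ _
    rw [himg, Set.ncard_image_of_injective _ hinj, hsplit,
      Set.ncard_union_eq hdisj hfin1 hfin2, ih, ← Finset.coe_Ioc,
      Set.ncard_coe_finset, Nat.card_Ioc]
    have e1 : q ^ (n / 2) ≤ q ^ ((n + 1) / 2) := Nat.pow_le_pow_right (by omega) (by omega)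
    have e2 : q ^ ((n + 1) / 2) ≤ q ^ n := Nat.pow_le_pow_right (by omega) (by omega)
    rw [hD, cGS_eq]
    omega

lemma ap_one_card {q : ℕ} (hq : 2 ≤ q) {n : ℕ} (hn : 2 ≤ n) :
    (Ap (GST q n) 1).ncard = q ^ (n / 2) := by
  rw [ap_one_eq hq hn]; exact card_low hq n hn

lemma ap_pow {q : ℕ} (hq : 2 ≤ q) {n i : ℕ} (h1 : 1 ≤ i) (h2 : i + 2 ≤ n) :
    (Ap (GST q n) (q ^ i)).ncard = q ^ ((n - i) / 2) + (q ^ i - 1) := by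
  have hq0 : 0 < q := by omega
  have hn1 : (1:ℕ) ≤ n := by omega
  set M := q ^ i with hM
  have hM1 : 1 < M := by
    calc 1 < q := by omega
    _ = q ^ 1 := (pow_one q).symm
    _ ≤ q ^ i := Nat.pow_le_pow_right (by omega) h1
  have hMdvd : ∀ k, k ≤ i → q ^ k ∣ M := fun k hk => pow_dvd_pow q hk
  have hres : ∀ s k, k ≤ i → (q ^ k ∣ s ↔ q ^ k ∣ s % M) := by
    intro s k hk
    have h0 : q ^ k ∣ M * (s / M) := Dvd.dvd.mul_right (hMdvd k hk) _
    have hdm := Nat.div_add_mod s M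
    constructor
    · intro h
      have h3 := Nat.dvd_sub h h0
      have e : s - M * (s / M) = s % M := by omega
      rwa [e] at h3
    · intro h
      have := Nat.dvd_add h0 h
      rwa [hdm] at this
  have hTanti : ∀ k k', k ≤ k' →
      q ^ n - q ^ ((n + k' + 1) / 2) ≤ q ^ n - q ^ ((n + k + 1) / 2) :=
    fun k k' h => Nat.sub_le_sub_left (Nat.pow_le_pow_right (by omega) (by omega)) _
  have hTbig : ∀ v, v ≤ n - 2 → M < q ^ n - q ^ ((n + v + 1) / 2) := by
    intro v hv
    have e2 : q ^ ((n + v + 1) / 2) ≤ q ^ (n - 1) :=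
      Nat.pow_le_pow_right (by omega) (by omega)
    have e3 : q ^ n = q * q ^ (n - 1) := by
      rw [← pow_succ']; congr 1; omega
    have e4 : M < q ^ (n - 1) := Nat.pow_lt_pow_right (by omega) (by omega)
    have e5 : 2 * q ^ (n - 1) ≤ q * q ^ (n - 1) :=
      Nat.mul_le_mul_right _ (by omega)
    omega
  -- the greatest-power-dividing function
  have hfind : ∀ r, 0 < r → r < M →
      ∃ v, v < i ∧ q ^ v ∣ r ∧ ¬ q ^ (v + 1) ∣ r := by
    intro r hr0 hrM
    set v := Nat.findGreatest (fun k => q ^ k ∣ r) i with hv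
    have hvle : v ≤ i := Nat.findGreatest_le i
    have hv1 : q ^ v ∣ r :=
      Nat.findGreatest_spec (P := fun k => q ^ k ∣ r) (m := 0) (Nat.zero_le i) (one_dvd r)
    have hvlt : v < i := by
      rcases Nat.lt_or_ge v i with h | h
      · exact h
      · exfalso
        have hvi : v = i := by omega
        rw [hvi] at hv1
        have := Nat.le_of_dvd hr0 hv1
        omega
    refine ⟨v, hvlt, hv1, ?_⟩
    exact Nat.findGreatest_is_greatest (P := fun k => q ^ k ∣ r) (n := i) (k := v + 1)
      (by omega) (by omega)
  have hstruct : ∀ s, s ∈ Ap (GST q n) M → ¬ M ∣ s →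
      ∀ v, q ^ v ∣ s % M → ¬ q ^ (v + 1) ∣ s % M → v < i →
      q ^ n - q ^ ((n + v + 1) / 2) ≤ s ∧ s < q ^ n - q ^ ((n + v + 1) / 2) + M := by
    rintro s ⟨hs, hap⟩ hnd v hv1 hv2 hvlt
    have hlow : q ^ n - q ^ ((n + v + 1) / 2) ≤ s := by
      rw [mem_GST' hq hn1] at hs
      obtain ⟨k, hk, hkd, hkle⟩ := hs
      have hkv : k ≤ v := by
        by_contra hgt
        push_neg at hgt
        rcases Nat.lt_or_ge k i with hki | hki
        · exact hv2 ((hres s (v + 1) (by omega)).mp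
            (dvd_trans (pow_dvd_pow q (by omega)) hkd))
        · exact hnd (dvd_trans (pow_dvd_pow q hki) hkd)
      exact le_trans (hTanti k v hkv) hkle
    have hb := hTbig v (by omega)
    refine ⟨hlow, ?_⟩
    by_contra hub
    push_neg at hub
    refine hap (s - M) ?_ (by omega)
    rw [mem_GST' hq hn1]
    exact ⟨v, by omega, Nat.dvd_sub ((hres s v (by omega)).mpr hv1)
      (hMdvd v (by omega)), by omega⟩
  -- S2 via residues
  have hS2inj : Set.InjOn (fun s => s % M) (Ap (GST q n) M ∩ {s | ¬ M ∣ s}) := by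
    rintro s ⟨hs, hnd⟩ s' ⟨hs', hnd'⟩ hmod
    simp only at hmod hnd hnd'
    have hr0 : 0 < s % M := Nat.pos_of_ne_zero (fun h => hnd (Nat.dvd_of_mod_eq_zero h))
    have hrM : s % M < M := Nat.mod_lt s (by omega)
    obtain ⟨v, hvlt, hv1, hv2⟩ := hfind (s % M) hr0 hrM
    obtain ⟨hlo, hhi⟩ := hstruct s hs hnd v hv1 hv2 hvlt
    obtain ⟨hlo', hhi'⟩ := hstruct s' hs' hnd' v (hmod ▸ hv1) (hmod ▸ hv2) hvlt
    rcases le_total s s' with hle | hle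
    · have hd : M ∣ s' - s := (Nat.modEq_iff_dvd' hle).mp hmod
      have h5 := Nat.eq_zero_of_dvd_of_lt hd (show s' - s < M by omega)
      omega
    · have hd : M ∣ s - s' := (Nat.modEq_iff_dvd' hle).mp hmod.symm
      have h5 := Nat.eq_zero_of_dvd_of_lt hd (show s - s' < M by omega)
      omega
  have hS2img : (fun s => s % M) '' (Ap (GST q n) M ∩ {s | ¬ M ∣ s}) = Set.Ioo 0 M := by
    ext r
    constructor
    · rintro ⟨s, ⟨⟨hsmem, hsap⟩, hnd⟩, rfl⟩
      simp only [Set.mem_Ioo]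
      simp only [Set.mem_setOf_eq] at hnd
      exact ⟨Nat.pos_of_ne_zero (fun h => hnd (Nat.dvd_of_mod_eq_zero h)),
        Nat.mod_lt s (by omega)⟩
    · intro hrIoo
      simp only [Set.mem_Ioo] at hrIoo
      obtain ⟨hr0, hrM⟩ := hrIoo
      obtain ⟨v, hvlt, hv1, hv2⟩ := hfind r hr0 hrM
      set a := q ^ n - q ^ ((n + v + 1) / 2) with ha
      have hbig : M < a := hTbig v (by omega)
      set d := (a + M - 1 - r) / M with hd
      have hdm := Nat.div_add_mod (a + M - 1 - r) M
      have hmlt : (a + M - 1 - r) % M < M := Nat.mod_lt _ (by omega)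
      set s := M * d + r with hs
      have hsin : a ≤ s ∧ s < a + M := by
        rw [← hd] at hdm
        omega
      have hsmod : s % M = r := by
        rw [hs, Nat.mul_add_mod]
        exact Nat.mod_eq_of_lt hrM
      have hsmem : s ∈ GST q n := by
        rw [mem_GST' hq hn1]
        exact ⟨v, by omega, (hres s v (by omega)).mpr (by rw [hsmod]; exact hv1), hsin.1⟩
      refine ⟨s, ⟨⟨hsmem, ?_⟩, ?_⟩, hsmod⟩
      · -- Ap property
        intro t ht heq
        have htmod : t % M = r := by
          have h3 : s % M = t % M := by rw [heq]; exact Nat.add_mod_right t M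
          omega
        rw [mem_GST' hq hn1] at ht
        obtain ⟨k, hk, hkd, hkle⟩ := ht
        have hkv : k ≤ v := by
          by_contra hgt
          push_neg at hgt
          rcases Nat.lt_or_ge k i with hki | hki
          · refine hv2 ?_
            rw [← htmod]
            exact (hres t (v + 1) (by omega)).mp (dvd_trans (pow_dvd_pow q (by omega)) hkd)
          · have hMt : M ∣ t := dvd_trans (pow_dvd_pow q hki) hkd
            obtain ⟨u, rfl⟩ := hMt
            have := Nat.mul_mod_right M u
            omega
        have hta : a ≤ t := le_trans (hTanti k v hkv) hkle
        omega
      · -- not divisible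
        simp only [Set.mem_setOf_eq]
        intro hdvd
        obtain ⟨u, hu⟩ := hdvd
        have := Nat.mul_mod_right M u
        rw [← hu] at this
        omega
  -- S1 via scaling
  have hS1 : Ap (GST q n) M ∩ {s | M ∣ s} = (fun y => M * y) '' Ap (GST q (n - i)) 1 := by
    ext s
    constructor
    · rintro ⟨⟨hs, hap⟩, hdvd⟩
      simp only [Set.mem_setOf_eq] at hdvd
      obtain ⟨y, rfl⟩ := hdvd
      refine ⟨y, ⟨?_, ?_⟩, rfl⟩
      · exact (gst_scale_pow hq i n y (by omega)).mp hs
      · intro t ht heq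
        refine hap (M * t) ((gst_scale_pow hq i n t (by omega)).mpr ht) ?_
        rw [heq]
        ring
    · rintro ⟨y, ⟨hy, hap⟩, rfl⟩
      refine ⟨⟨(gst_scale_pow hq i n y (by omega)).mpr hy, ?_⟩, dvd_mul_right M y⟩
      intro t ht heq
      replace heq : M * y = t + M := heq
      have hy1 : 1 ≤ y := by
        rcases Nat.eq_zero_or_pos y with rfl | h
        · simp at heq
          omega
        · exact h
      have hMt : M ∣ t := by
        have he : t = M * y - M := by omega
        rw [he]
        exact Nat.dvd_sub (dvd_mul_right M y) (dvd_refl M)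
      obtain ⟨u, rfl⟩ := hMt
      have hyu : y = u + 1 := by
        have h3 : M * y = M * (u + 1) := by rw [heq]; ring
        exact Nat.eq_of_mul_eq_mul_left (by omega) h3
      exact hap u ((gst_scale_pow hq i n u (by omega)).mp ht) hyu
  -- assemble
  have hfinAp : (Ap (GST q n) M).Finite := by
    refine (Set.finite_Iic (cGS q n + M)).subset ?_
    rintro s ⟨hs, hap⟩
    simp only [Set.mem_Iic]
    by_contra h
    push_neg at h
    exact hap (s - M) (gst_cGS_mem hq hn1 (by omega)) (by omega)
  have hsplit : Ap (GST q n) M =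
      (Ap (GST q n) M ∩ {s | M ∣ s}) ∪ (Ap (GST q n) M ∩ {s | ¬ M ∣ s}) := by
    ext s
    by_cases h : M ∣ s <;> simp [h]
  have hdisj : Disjoint (Ap (GST q n) M ∩ {s | M ∣ s})
      (Ap (GST q n) M ∩ {s | ¬ M ∣ s}) := by
    rw [Set.disjoint_left]
    rintro s ⟨_, h⟩ ⟨_, h'⟩
    exact h' h
  have hcard2 : (Ap (GST q n) M ∩ {s | ¬ M ∣ s}).ncard = M - 1 := by
    rw [← Set.ncard_image_of_injOn hS2inj, hS2img, ← Finset.coe_Ioo,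
      Set.ncard_coe_finset, Nat.card_Ioo]
    omega
  have hcard1 : (Ap (GST q n) M ∩ {s | M ∣ s}).ncard = q ^ ((n - i) / 2) := by
    rw [hS1, Set.ncard_image_of_injective _ (mul_right_injective₀ (show M ≠ 0 by omega)),
      ap_one_card hq (show 2 ≤ n - i by omega)]
  rw [hsplit, Set.ncard_union_eq hdisj (hfinAp.subset Set.inter_subset_left)
    (hfinAp.subset Set.inter_subset_left), hcard1, hcard2]

/-- Here `⌊m - i/2⌋ = m - (i+1)/2` and `⌈m - i/2⌉ = m - i/2` in natural division. -/
theorem stmt13 (q : ℕ) (hq : 2 ≤ q) (n : ℕ) (hn : 2 ≤ n) :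
    (Ap (GST q n) (q ^ (n - 1))).ncard = q ^ (n - 1)
    ∧ (Ap (GST q n) 1).ncard = q ^ (n / 2)
    ∧ (∀ m, n = 2 * m → ∀ i, 1 ≤ i → i ≤ n - 2 →
        (Ap (GST q n) (q ^ i)).ncard = (q ^ (m - (i + 1) / 2) - 1) + q ^ i)
    ∧ (∀ m, n = 2 * m + 1 → ∀ i, 1 ≤ i → i ≤ n - 2 →
        (Ap (GST q n) (q ^ i)).ncard = (q ^ (m - i / 2) - 1) + q ^ i) := by
  have hn1 : (1:ℕ) ≤ n := by omega
  refine ⟨?_, ap_one_card hq hn, ?_, ?_⟩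
  · exact ap_card_of_mem (GST q n) (q ^ (n - 1)) (cGS q n) (pow_pos (by omega) _)
      (fun s hs => gst_add_pow_mem hq hn1 hs) (fun s hs => gst_cGS_mem hq hn1 hs)
  · rintro m rfl i hi1 hi2
    rw [ap_pow hq hi1 (by omega)]
    have he : (2 * m - i) / 2 = m - (i + 1) / 2 := by omega
    rw [he]
    have p1 : 0 < q ^ (m - (i + 1) / 2) := pow_pos (by omega) _
    have p2 : 0 < q ^ i := pow_pos (by omega) _
    omega
  · rintro m rfl i hi1 hi2
    rw [ap_pow hq hi1 (by omega)]
    have he : (2 * m + 1 - i) / 2 = m - i / 2 := by omega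
    rw [he]
    have p1 : 0 < q ^ (m - i / 2) := pow_pos (by omega) _
    have p2 : 0 < q ^ i := pow_pos (by omega) _
    omega
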